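/- arXiv:2403.18727 — 3 statements merged into one kernel-verified Lean document; each statement's English description precedes it below -/
import Mathlib

section
/- Let $p$ be a prime and $\mathbbm{k}$ an algebraically closed field of characteristic $p$. Let $\lambda(u) = (1+\alpha_1 u^{-1})\cdots(1+\alpha_k u^{-1}) \in 1 + u^{-1}\mathbbm{k}[u^{-1}]$ be a polynomial in $u^{-1}$ with constant term $1$. If $\lambda(u)\lambda(u-1)\cdots\lambda(u-p+1) = 1$, then every root parameter $\alpha_i$ lies in the prime field $\mathbb{F}_p$. -/
open Polynomial

/-- If `λ(u) = ∏ (1 + αⱼ u⁻¹)` is restricted, i.e.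
`∏_{j} ∏_{i=0}^{p-1} (u + αⱼ - i) = ∏_{i=0}^{p-1} (u - i)^k` as polynomials in `u`,
then every `αⱼ` lies in `𝔽_p` (equivalently `αⱼ^p = αⱼ`). -/
theorem restricted_polynomial_roots_in_Fp
    (p : ℕ) [Fact p.Prime] (𝕜 : Type*) [Field 𝕜] [IsAlgClosed 𝕜] [CharP 𝕜 p]
    (k : ℕ) (α : Fin k → 𝕜)
    (h : ∏ j : Fin k, ∏ i ∈ Finset.range p, (X + C (α j) - C (i : 𝕜)) =
        ∏ i ∈ Finset.range p, (X - C (i : 𝕜)) ^ k) :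
    ∀ j : Fin k, (α j) ^ p = α j := by
  intro j
  have hp : p.Prime := Fact.out
  have hx := congrArg (Polynomial.eval (-(α j))) h
  simp only [eval_prod, eval_pow, eval_sub, eval_add, eval_C, eval_X] at hx
  have hL : (∏ j' : Fin k, ∏ i ∈ Finset.range p, (-(α j) + α j' - (i : 𝕜))) = 0 := by
    apply Finset.prod_eq_zero (Finset.mem_univ j)
    apply Finset.prod_eq_zero (Finset.mem_range.mpr hp.pos)
    simp
  rw [hL] at hx
  obtain ⟨i, hi, hzero⟩ := Finset.prod_eq_zero_iff.mp hx.symm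
  have hk : k ≠ 0 := by rintro rfl; exact j.elim0
  have hbase : -(α j) - (i : 𝕜) = 0 := by
    exact pow_eq_zero_iff hk |>.mp hzero
  have hα : α j = -((i : ℕ) : 𝕜) := by linear_combination -hbase
  have hcast : ((i : ℕ) : 𝕜) ^ p = ((i : ℕ) : 𝕜) := by
    rw [← map_natCast (ZMod.castHom (dvd_refl p) 𝕜) i, ← map_pow, ZMod.pow_card]
  rw [hα, neg_pow, neg_one_pow_char 𝕜 p, hcast, neg_one_mul]
end

section
/- Let $\mathbbm{k}$ be an algebraically closed field of characteristic $p>0$, and let $\alpha_1,\dots,\alpha_k, \beta_1,\dots,\beta_k \in \mathbbm{k}$ be such that the rational function $\prod_{i=1}^k \frac{u+\alpha_i}{u+\beta_i}$ is restricted, i.e. $\prod_{j=0}^{p-1}\prod_{i=1}^{k} \frac{u-j+\alpha_i}{u-j+\beta_i} = 1$. Then for each index $i$ there exists an index $j$ with $\alpha_i - \beta_j \in \mathbb{F}_p$. -/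
/-- if the rational function `∏ᵢ (u+αᵢ)/(u+βᵢ)` is restricted,
i.e. `∏_{j=0}^{p-1} ∏ᵢ (u-j+αᵢ)/(u-j+βᵢ) = 1`, then for each `i` there is `j`
with `αᵢ - βⱼ ∈ 𝔽_p` (equivalently `(αᵢ - βⱼ)^p = αᵢ - βⱼ`). -/
theorem restricted_ratio_matching
    (p : ℕ) [Fact p.Prime] (𝕜 : Type*) [Field 𝕜] [IsAlgClosed 𝕜] [CharP 𝕜 p]
    (k : ℕ) (α β : Fin k → 𝕜)
    (h : ∏ j ∈ Finset.range p, ∏ i : Fin k,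
        ((RatFunc.X : RatFunc 𝕜) - (j : RatFunc 𝕜) + RatFunc.C (α i)) /
          ((RatFunc.X : RatFunc 𝕜) - (j : RatFunc 𝕜) + RatFunc.C (β i)) = 1) :
    ∀ i : Fin k, ∃ j : Fin k, (α i - β j) ^ p = α i - β j := by
  classical
  set F := algebraMap (Polynomial 𝕜) (RatFunc 𝕜) with hF
  have hfac : ∀ (j : ℕ) (c : 𝕜),
      (RatFunc.X : RatFunc 𝕜) - (j : RatFunc 𝕜) + RatFunc.C c
        = F (Polynomial.X + Polynomial.C (c - j)) := by
    intro j c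
    simp only [F, map_add, map_sub, RatFunc.algebraMap_X, RatFunc.algebraMap_C, map_natCast]
    ring
  have hne : ∀ (j : ℕ) (c : 𝕜), F (Polynomial.X + Polynomial.C (c - j)) ≠ 0 := by
    intro j c
    exact (map_ne_zero_iff F (RatFunc.algebraMap_injective 𝕜)).mpr
      (Polynomial.X_add_C_ne_zero (c - j))
  simp only [hfac] at h
  have hden : (∏ j ∈ Finset.range p, ∏ i : Fin k,
      F (Polynomial.X + Polynomial.C (β i - j))) ≠ 0 := by
    refine Finset.prod_ne_zero_iff.mpr fun j _ => Finset.prod_ne_zero_iff.mpr fun i _ => ?_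
    exact hne j (β i)
  have hPQ : (∏ j ∈ Finset.range p, ∏ i : Fin k,
      (Polynomial.X + Polynomial.C (α i - j)))
      = ∏ j ∈ Finset.range p, ∏ i : Fin k,
      (Polynomial.X + Polynomial.C (β i - j)) := by
    apply RatFunc.algebraMap_injective 𝕜
    rw [map_prod, map_prod]
    simp only [map_prod]
    rw [← div_eq_one_iff_eq hden]
    rw [← h]
    simp only [← Finset.prod_div_distrib]
    rfl
  -- evaluate at -(α i)
  intro i
  have hevalP : Polynomial.eval (-(α i)) (∏ j ∈ Finset.range p, ∏ i : Fin k,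
      (Polynomial.X + Polynomial.C (α i - j))) = 0 := by
    have hp : 0 < p := (Fact.out : p.Prime).pos
    rw [Polynomial.eval_prod]
    refine Finset.prod_eq_zero (Finset.mem_range.mpr hp) ?_
    rw [Polynomial.eval_prod]
    refine Finset.prod_eq_zero (Finset.mem_univ i) ?_
    simp
  rw [hPQ, Polynomial.eval_prod] at hevalP
  obtain ⟨j, _, hj⟩ := Finset.prod_eq_zero_iff.mp hevalP
  rw [Polynomial.eval_prod] at hj
  obtain ⟨i', _, hi'⟩ := Finset.prod_eq_zero_iff.mp hj
  simp only [Polynomial.eval_add, Polynomial.eval_X, Polynomial.eval_C] at hi'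
  have key : α i - β i' = -(j : 𝕜) := by linear_combination -hi'
  refine ⟨i', ?_⟩
  rw [key]
  have : ((-(j : 𝕜)) : 𝕜) ^ p = frobenius 𝕜 p (-(j : 𝕜)) := rfl
  rw [this, map_neg, map_natCast]
end

section
/- Let $\mathbbm{k}$ be an algebraically closed field of characteristic $p$, let $\alpha_1, \beta_1, \ldots, \alpha_k, \beta_k \in \mathbb{F}_p$, and suppose $0 \le s \le [\alpha_1 - \beta_1]$ and $[\alpha_1 - \beta_j] \ge [\alpha_1 - \beta_1]$ for all $j = 1, \ldots, k$. If $s(\alpha_1 - \beta_1 - s + 1)(\alpha_1 - \beta_2 - s + 1)\cdots(\alpha_1 - \beta_k - s + 1) = 0$ in $\mathbbm{k}$, then $s = 0$. -/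
/-- the arithmetic crux of irreducibility of tensor products of
evaluation modules: for `α₁, βⱼ ∈ 𝔽_p`, if `0 ≤ s ≤ [α₁ - β₁]`,
`[α₁ - βⱼ] ≥ [α₁ - β₁]` for all `j`, and
`s · ∏ⱼ (α₁ - βⱼ - s + 1) = 0` in `𝕜`, then `s = 0`. -/
theorem tensor_irreducibility_arithmetic_lemma
    (p : ℕ) [Fact p.Prime] (𝕜 : Type*) [Field 𝕜] [IsAlgClosed 𝕜] [CharP 𝕜 p]
    (k : ℕ) (hk : 0 < k) (α : ZMod p) (β : Fin k → ZMod p) (s : ℕ)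
    (hs : s ≤ (α - β ⟨0, hk⟩).val)
    (hmin : ∀ j : Fin k, (α - β ⟨0, hk⟩).val ≤ (α - β j).val)
    (h : (s : 𝕜) * ∏ j : Fin k,
        (ZMod.castHom (dvd_refl p) 𝕜 α - ZMod.castHom (dvd_refl p) 𝕜 (β j)
          - (s : 𝕜) + 1) = 0) :
    s = 0 := by
  by_contra hs0
  have hp : p ∣ s ∨ _ := (mul_eq_zero.mp h).imp (fun hz => (CharP.cast_eq_zero_iff 𝕜 p s).mp hz) id
  have hslt : s < p := lt_of_le_of_lt hs (ZMod.val_lt _)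
  rcases hp with hp | hp
  · exact hs0 (Nat.eq_zero_of_dvd_of_lt hp hslt)
  · obtain ⟨j, -, hj⟩ := Finset.prod_eq_zero_iff.mp hp
    -- rewrite factor as image of castHom
    have hinj : Function.Injective (ZMod.castHom (dvd_refl p) 𝕜) := RingHom.injective _
    have hfac : α - β j - (s : ZMod p) + 1 = 0 := by
      apply hinj
      simpa [map_sub, map_add, map_natCast] using hj
    have hsz : (s : ZMod p) = α - β j + 1 := by linear_combination -hfac
    have hv : s = ((α - β j).val + 1) % p := by
      have := congrArg ZMod.val hsz
      rw [ZMod.val_cast_of_lt hslt] at this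
      rw [this]
      have : (α - β j + 1).val = ((α - β j).val + 1) % p := by
        rw [ZMod.val_add, ZMod.val_one_eq_one_mod]
        conv_rhs => rw [Nat.add_mod]
        rw [Nat.mod_eq_of_lt (ZMod.val_lt (α - β j))]
      exact this
    set v := (α - β j).val with hvdef
    have hvle : (α - β ⟨0, hk⟩).val ≤ v := hmin j
    have hvp : v < p := ZMod.val_lt _
    rcases eq_or_lt_of_le (Nat.succ_le_of_lt hvp) with he | hl
    · rw [hv, ← he] at hs0
      simp at hs0
    · rw [Nat.mod_eq_of_lt hl] at hv
      omega
end
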